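/- Suppose Ω = β⁻/α + s²/2 where β⁻ = β/(1 - c_cp). Then along any solution (p(ξ), q(ξ)) of the planar system p' = p² - q² - αsp + sq + h + μ - β⁻/α - s²/2, q' = 2pq - sp - αsq + αs²/2 with q(ξ) ≠ s/2 for all ξ, the function H(p,q) = (p² + q² - αsp - sq + h - β⁻/α + μ)/(q - s/2) is constant. -/

import Mathlib

/-- In the center case `Ω = β⁻/α + s²/2` (with `β⁻ = β/(1 - c_cp)`), the function
`H(p,q) = (p² + q² - αsp - sq + h - β⁻/α + μ)/(q - s/2)` is constant along every
solution of the planar chart system which avoids the line `q = s/2`. -/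
theorem hamiltonian_constant_on_pi_chart (α β μ h s c_cp : ℝ)
    (hα : 0 < α) (hβ : 0 ≤ β) (hc : c_cp ∈ Set.Ioo (-1 : ℝ) 1)
    (p q : ℝ → ℝ)
    (hp : ∀ ξ : ℝ, HasDerivAt p
      ((p ξ) ^ 2 - (q ξ) ^ 2 - α * s * p ξ + s * q ξ + h + μ
        - (β / (1 - c_cp)) / α - s ^ 2 / 2) ξ)
    (hq : ∀ ξ : ℝ, HasDerivAt q
      (2 * p ξ * q ξ - s * p ξ - α * s * q ξ + α * s ^ 2 / 2) ξ)
    (hne : ∀ ξ : ℝ, q ξ ≠ s / 2) :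
    ∀ ξ₁ ξ₂ : ℝ,
      ((p ξ₁) ^ 2 + (q ξ₁) ^ 2 - α * s * p ξ₁ - s * q ξ₁ + h
          - (β / (1 - c_cp)) / α + μ) / (q ξ₁ - s / 2)
        = ((p ξ₂) ^ 2 + (q ξ₂) ^ 2 - α * s * p ξ₂ - s * q ξ₂ + h
          - (β / (1 - c_cp)) / α + μ) / (q ξ₂ - s / 2) := by
  set b : ℝ := (β / (1 - c_cp)) / α with hb
  set F : ℝ → ℝ := fun ξ =>
    ((p ξ) ^ 2 + (q ξ) ^ 2 - α * s * p ξ - s * q ξ + h - b + μ) / (q ξ - s / 2)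
    with hF
  have key : ∀ ξ : ℝ, HasDerivAt F 0 ξ := by
    intro ξ
    have hDne : q ξ - s / 2 ≠ 0 := sub_ne_zero.mpr (hne ξ)
    set p' : ℝ := (p ξ) ^ 2 - (q ξ) ^ 2 - α * s * p ξ + s * q ξ + h + μ - b - s ^ 2 / 2
      with hp'
    set q' : ℝ := 2 * p ξ * q ξ - s * p ξ - α * s * q ξ + α * s ^ 2 / 2 with hq'
    have hN : HasDerivAt (fun ξ =>
        (p ξ) ^ 2 + (q ξ) ^ 2 - α * s * p ξ - s * q ξ + h - b + μ)
        ((2 * p ξ - α * s) * p' + (2 * q ξ - s) * q') ξ := by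
      have h1 := ((hp ξ).pow 2).add ((hq ξ).pow 2)
      have h2 := h1.sub ((hp ξ).const_mul (α * s))
      have h3 := h2.sub ((hq ξ).const_mul s)
      have h4 := ((h3.add_const h).sub_const b).add_const μ
      refine h4.congr_deriv ?_
      ring
    have hD : HasDerivAt (fun ξ => q ξ - s / 2) q' ξ := (hq ξ).sub_const _
    have hdiv := hN.div hD hDne
    refine hdiv.congr_deriv ?_
    field_simp
    ring
  have hconst := is_const_of_deriv_eq_zero
    (fun ξ => (key ξ).differentiableAt) (fun ξ => (key ξ).deriv)
  intro ξ₁ ξ₂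
  exact hconst ξ₁ ξ₂
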